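/- Let A₁ = [[1,2],[1,0]], A₂ = [[1/3,4/3],[2/3,−1/3]], G = [[1,2],[−1,−2]] be 2×2 real matrices, and v = (1,−1) ∈ ℝ². Then: (i) A₁v = A₂v = −v; (ii) G·Gᵀ = 5·v·vᵀ; (iii) the curve m(t) = e^{−t}v satisfies m'(t) = A₁m(t) and m'(t) = A₂m(t) for all t ≥ 0 with m(0) = v; and (iv) the matrix curve Σ(t) = (5/2)(1−e^{−2t})·v·vᵀ satisfies Σ(0) = 0 and, for all t ≥ 0 and both i = 1,2, Σ'(t) = A_iΣ(t) + Σ(t)A_iᵀ + GGᵀ. Consequently the Gaussian marginals N(m(t),Σ(t)) of the two linear SDEs dXₜ = A_iXₜdt + GdWₜ started at X₀ = v coincide for all t. -/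

import Mathlib

open Matrix

private lemma deriv_exp_neg' (t : ℝ) :
    HasDerivAt (fun s : ℝ => Real.exp (-s)) (-Real.exp (-t)) t := by
  simpa using ((hasDerivAt_id t).neg).exp

private lemma deriv_cov' (t c : ℝ) :
    HasDerivAt (fun s : ℝ => (5 / 2) * (1 - Real.exp (-2 * s)) * c)
      (5 * Real.exp (-2 * t) * c) t := by
  have h : HasDerivAt (fun s : ℝ => Real.exp (-2 * s)) (-2 * Real.exp (-2 * t)) t := by
    have := ((hasDerivAt_id t).const_mul (-2 : ℝ)).exp
    simp only [id_eq, mul_one] at this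
    convert this using 1
    ring
  have := (((hasDerivAt_const t (1 : ℝ)).sub h).const_mul (5 / 2)).mul_const c
  refine this.congr_deriv ?_
  ring

/-- The degenerate-rank example: the two linear SDEs `dXₜ = AᵢXₜdt + GdWₜ`, `i = 1,2`, started
at `X₀ = v = (1,−1)`, have the same Gaussian marginals `N(m(t),Σ(t))`: (i) `A₁v = A₂v = −v`;
(ii) `GGᵀ = 5·vvᵀ`; (iii) the mean `m(t) = e^{−t}v` solves `m' = Aᵢm`, `m(0) = v`, for both
`i`; (iv) the covariance `Σ(t) = (5/2)(1−e^{−2t})·vvᵀ` satisfies `Σ(0) = 0` and the Lyapunov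
ODE `Σ' = AᵢΣ + ΣAᵢᵀ + GGᵀ` (entrywise) for both `i`. -/
theorem degenerate_rank_non_identifiable
    (A₁ A₂ G : Matrix (Fin 2) (Fin 2) ℝ) (v : Fin 2 → ℝ)
    (hA₁ : A₁ = !![1, 2; 1, 0]) (hA₂ : A₂ = !![1/3, 4/3; 2/3, -1/3])
    (hG : G = !![1, 2; -1, -2]) (hv : v = ![1, -1])
    (m : ℝ → Fin 2 → ℝ) (hm : m = fun t => Real.exp (-t) • v)
    (S : ℝ → Matrix (Fin 2) (Fin 2) ℝ)
    (hS : S = fun t => ((5 / 2) * (1 - Real.exp (-2 * t))) • Matrix.vecMulVec v v) :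
    (A₁.mulVec v = -v ∧ A₂.mulVec v = -v)
    ∧ G * Gᵀ = (5 : ℝ) • Matrix.vecMulVec v v
    ∧ (m 0 = v ∧ ∀ t : ℝ, 0 ≤ t →
        HasDerivAt m (A₁.mulVec (m t)) t ∧ HasDerivAt m (A₂.mulVec (m t)) t)
    ∧ (S 0 = 0 ∧ ∀ t : ℝ, 0 ≤ t → ∀ i j : Fin 2,
        HasDerivAt (fun s => S s i j) ((A₁ * S t + S t * A₁ᵀ + G * Gᵀ) i j) t
        ∧ HasDerivAt (fun s => S s i j) ((A₂ * S t + S t * A₂ᵀ + G * Gᵀ) i j) t) := by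
  subst hA₁ hA₂ hG hv hm hS
  refine ⟨⟨?_, ?_⟩, ?_, ⟨?_, ?_⟩, ⟨?_, ?_⟩⟩
  · funext i; fin_cases i <;>
      · simp only [Matrix.mulVec, dotProduct, Fin.sum_univ_two, Matrix.of_apply,
          Matrix.cons_val', Matrix.cons_val_zero, Matrix.cons_val_one, Matrix.head_cons,
          Matrix.head_fin_const, Matrix.empty_val', Matrix.cons_val_fin_one, Fin.mk_zero, Fin.mk_one, Pi.neg_apply]
        norm_num
  · funext i; fin_cases i <;>
      · simp only [Matrix.mulVec, dotProduct, Fin.sum_univ_two, Matrix.of_apply,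
          Matrix.cons_val', Matrix.cons_val_zero, Matrix.cons_val_one, Matrix.head_cons,
          Matrix.head_fin_const, Matrix.empty_val', Matrix.cons_val_fin_one, Fin.mk_zero, Fin.mk_one, Pi.neg_apply]
        norm_num
  · funext i j; fin_cases i <;> fin_cases j <;>
      · simp only [Matrix.mul_apply, Fin.sum_univ_two, Matrix.transpose_apply,
          Matrix.smul_apply, Matrix.vecMulVec_apply, smul_eq_mul, Matrix.of_apply,
          Matrix.cons_val', Matrix.cons_val_zero, Matrix.cons_val_one, Matrix.head_cons,
          Matrix.head_fin_const, Matrix.empty_val', Matrix.cons_val_fin_one, Fin.mk_zero, Fin.mk_one]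
        norm_num
  · simp
  · intro t _
    have hd : HasDerivAt (fun s => Real.exp (-s) • (![1, -1] : Fin 2 → ℝ))
        ((-Real.exp (-t)) • (![1, -1] : Fin 2 → ℝ)) t :=
      (deriv_exp_neg' t).smul_const _
    constructor <;>
    · convert hd using 1
      funext i; fin_cases i <;>
        · simp only [Matrix.mulVec, dotProduct, Fin.sum_univ_two, Pi.smul_apply,
            smul_eq_mul, Matrix.of_apply, Matrix.cons_val', Matrix.cons_val_zero,
            Matrix.cons_val_one, Matrix.head_cons, Matrix.head_fin_const, Matrix.empty_val',
            Matrix.cons_val_fin_one, Fin.mk_zero, Fin.mk_one]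
          ring
  · funext i j; fin_cases i <;> fin_cases j <;> simp
  · intro t _ i j
    have key : ∀ i j : Fin 2, HasDerivAt
        (fun s => (((5 / 2) * (1 - Real.exp (-2 * s))) •
          Matrix.vecMulVec (![1, -1] : Fin 2 → ℝ) ![1, -1]) i j)
        (5 * Real.exp (-2 * t) * ((![1, -1] : Fin 2 → ℝ) i * (![1, -1] : Fin 2 → ℝ) j)) t := by
      intro i j
      simp only [Matrix.smul_apply, Matrix.vecMulVec_apply, smul_eq_mul]
      exact deriv_cov' t _
    constructor <;>
    · convert key i j using 2
      fin_cases i <;> fin_cases j <;>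
        · simp only [Matrix.add_apply, Matrix.mul_apply, Fin.sum_univ_two,
            Matrix.transpose_apply, Matrix.smul_apply, Matrix.vecMulVec_apply, smul_eq_mul,
            Matrix.of_apply, Matrix.cons_val', Matrix.cons_val_zero, Matrix.cons_val_one,
            Matrix.head_cons, Matrix.head_fin_const, Matrix.empty_val', Matrix.cons_val_fin_one, Fin.mk_zero, Fin.mk_one]
          ring
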